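/- Let A and B be uniform algebras on compact Hausdorff spaces X and Y, let T : S(A) → S(B) be a surjective isometry, and let φ : Ch(A) → Ch(B) be a bijection and τ : Ch(A) × 𝕋 → 𝕋 a map with T(F_{x,λ}) = F_{φ(x), τ(x,λ)} for all x ∈ Ch(A), λ ∈ 𝕋. Define Ch(A)₊ = {x ∈ Ch(A) : τ(x,i)/τ(x,1) = i} and Ch(A)₋ = {x ∈ Ch(A) : τ(x,i)/τ(x,1) = −i}. Then for every f ∈ S(A): T(f)(φ(x)) = τ(x,1)·f(x) if x ∈ Ch(A)₊, and T(f)(φ(x)) = τ(x,1)·conj(f(x)) if x ∈ Ch(A)₋. -/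

import Mathlib

open scoped ComplexConjugate

/-- A peaking function for the set `K` in a (sub)algebra `A` of `C(X, ℂ)`:
`f ∈ A`, `‖f‖ = 1`, `K = f⁻¹(1)` and `{x : |f(x)| = 1} = f⁻¹(1) = K`. -/
def IsPeakingFunction {X : Type*} [TopologicalSpace X] [CompactSpace X]
    (A : Subalgebra ℂ C(X, ℂ)) (f : C(X, ℂ)) (K : Set X) : Prop :=
  f ∈ A ∧ ‖f‖ = 1 ∧ K = {x | f x = 1} ∧ {x | ‖f x‖ = 1} = K

/-- A peak set for `A`. -/
def IsPeakSet {X : Type*} [TopologicalSpace X] [CompactSpace X]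
    (A : Subalgebra ℂ C(X, ℂ)) (K : Set X) : Prop :=
  ∃ f, IsPeakingFunction A f K

/-- A weak peak set for `A`: an intersection of a nonempty family of peak sets. -/
def IsWeakPeakSet {X : Type*} [TopologicalSpace X] [CompactSpace X]
    (A : Subalgebra ℂ C(X, ℂ)) (K : Set X) : Prop :=
  ∃ S : Set (Set X), S.Nonempty ∧ (∀ E ∈ S, IsPeakSet A E) ∧ K = ⋂₀ S

/-- The Choquet boundary of a uniform algebra: the set of weak peak points. -/
def choquetBdry {X : Type*} [TopologicalSpace X] [CompactSpace X]
    (A : Subalgebra ℂ C(X, ℂ)) : Set X :=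
  {x | IsWeakPeakSet A {x}}

/-- The unit sphere `S(A)` of `A`, as a subset of `C(X, ℂ)`. -/
def uaSphere {X : Type*} [TopologicalSpace X] [CompactSpace X]
    (A : Subalgebra ℂ C(X, ℂ)) : Set C(X, ℂ) :=
  {f | f ∈ A ∧ ‖f‖ = 1}

/-- The set `F_{x,λ} = {f ∈ S(A) : f x = λ}`. -/
def uaSlice {X : Type*} [TopologicalSpace X] [CompactSpace X]
    (A : Subalgebra ℂ C(X, ℂ)) (x : X) (lam : ℂ) : Set C(X, ℂ) :=
  {f | f ∈ uaSphere A ∧ f x = lam}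

/-- Compatibility: the complex absolute value as an `AbsoluteValue`. -/
noncomputable def Complex.abs : AbsoluteValue ℂ ℝ where
  toFun z := ‖z‖
  map_mul' := norm_mul
  nonneg' := norm_nonneg
  eq_zero' _ := norm_eq_zero
  add_le' := norm_add_le

theorem Complex.abs_apply (z : ℂ) : Complex.abs z = ‖z‖ := rfl
theorem Complex.norm_eq_abs (z : ℂ) : ‖z‖ = Complex.abs z := rfl
theorem Complex.abs_ofReal (r : ℝ) : Complex.abs (r : ℂ) = |r| := by
  rw [Complex.abs_apply, Complex.norm_real, Real.norm_eq_abs]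
theorem Complex.abs_I : Complex.abs Complex.I = 1 := by
  rw [Complex.abs_apply, Complex.norm_I]
theorem Complex.abs_conj (z : ℂ) : Complex.abs (conj z) = Complex.abs z := by
  rw [Complex.abs_apply, Complex.abs_apply, Complex.norm_conj]
@[continuity]
theorem Complex.continuous_abs : Continuous Complex.abs := continuous_norm
theorem Complex.sq_abs (z : ℂ) : Complex.abs z ^ 2 = Complex.normSq z := Complex.sq_norm z
theorem Complex.normSq_eq_abs (z : ℂ) : Complex.normSq z = Complex.abs z ^ 2 :=
  Complex.normSq_eq_norm_sq z
theorem Complex.re_le_abs (z : ℂ) : z.re ≤ Complex.abs z := Complex.re_le_norm z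
theorem Complex.abs_exp (z : ℂ) : Complex.abs (Complex.exp z) = Real.exp z.re :=
  Complex.norm_exp z
theorem Complex.abs_exp_sub_one_le {z : ℂ} (hz : Complex.abs z ≤ 1) :
    Complex.abs (Complex.exp z - 1) ≤ 2 * Complex.abs z := Complex.norm_exp_sub_one_le hz

namespace UAhelp

open Complex

variable {X : Type*} [TopologicalSpace X] [CompactSpace X]

/-- Evaluation of a `HasSum` of continuous maps. -/
lemma hasSum_apply {ι : Type*} {F : ι → C(X, ℂ)} {g : C(X, ℂ)} (h : HasSum F g) (t : X) :
    HasSum (fun n => F n t) (g t) := by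
  have := h.mapL (ContinuousMap.evalCLM ℂ t)
  simpa [ContinuousMap.evalCLM] using this

/-- Peak-set localization: a function in `A` peaking at `x` with values `≠ 1` off `U`. -/
lemma peak_localize (A : Subalgebra ℂ C(X, ℂ)) {x : X} (hx : x ∈ choquetBdry A)
    {U : Set X} (hU : IsOpen U) (hxU : x ∈ U) :
    ∃ w : C(X, ℂ), w ∈ A ∧ (∀ t, Complex.abs (w t) ≤ 1) ∧ w x = 1 ∧
      ∃ γ : ℝ, 0 < γ ∧ γ ≤ 1 ∧ ∀ t ∉ U, γ ≤ Complex.abs (1 - w t) := by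
  classical
  obtain ⟨S, hSne, hSpk, hSx⟩ := hx
  have hxmem : ∀ E ∈ S, x ∈ E := by
    intro E hE
    have : x ∈ ⋂₀ S := by rw [← hSx]; exact rfl
    exact this E hE
  choose F hF using fun i : S => hSpk i i.2
  -- each peak set is closed
  have hclosed : ∀ i : S, IsClosed (i : Set X) := by
    intro i
    have h3 := (hF i).2.2.1
    rw [h3]
    exact isClosed_eq ((ContinuousMap.continuous _).comp continuous_id') continuous_const
  have hUc : IsCompact Uᶜ := hU.isClosed_compl.isCompact
  have hempty : Uᶜ ∩ ⋂ i : S, (i : Set X) = ∅ := by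
    have : ⋂ i : S, (i : Set X) = {x} := by
      rw [hSx, Set.sInter_eq_iInter]
    rw [this]
    ext t; simp only [Set.mem_inter_iff, Set.mem_compl_iff, Set.mem_singleton_iff,
      Set.mem_empty_iff_false, iff_false, not_and]
    rintro htU rfl; exact htU hxU
  obtain ⟨s, hs⟩ := hUc.elim_finite_subfamily_closed _ hclosed hempty
  set w : C(X, ℂ) := ∏ i ∈ s, F i with hw
  have hwmem : w ∈ A := Subalgebra.prod_mem A fun i _ => (hF i).1
  have habs : ∀ i : S, ∀ t, Complex.abs (F i t) ≤ 1 := by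
    intro i t
    have := ContinuousMap.norm_coe_le_norm (F i) t
    rw [(hF i).2.1] at this
    simpa [Complex.norm_eq_abs] using this
  have hwabs : ∀ t, Complex.abs (w t) ≤ 1 := by
    intro t
    rw [hw, ContinuousMap.prod_apply, map_prod]
    exact Finset.prod_le_one (fun i _ => Complex.abs.nonneg _) (fun i _ => habs i t)
  have hwx : w x = 1 := by
    rw [hw, ContinuousMap.prod_apply]
    apply Finset.prod_eq_one
    intro i _
    have hxi : x ∈ (i : Set X) := hxmem i i.2
    have h3 := (hF i).2.2.1
    rw [h3] at hxi
    exact hxi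
  have hwne : ∀ t ∉ U, w t ≠ 1 := by
    intro t htU
    -- there is i ∈ s with t ∉ i
    have : ∃ i ∈ s, t ∉ (i : Set X) := by
      by_contra hcon
      push_neg at hcon
      have : t ∈ Uᶜ ∩ ⋂ i ∈ s, (i : Set X) := ⟨htU, by simpa using hcon⟩
      rw [hs] at this
      exact this
    obtain ⟨i, his, hti⟩ := this
    have hlt : Complex.abs (F i t) < 1 := by
      rcases lt_or_eq_of_le (habs i t) with h | h
      · exact h
      · exfalso
        have h4 := (hF i).2.2.2
        have : t ∈ {y | ‖F i y‖ = 1} := h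
        rw [h4] at this
        exact hti this
    have : Complex.abs (w t) < 1 := by
      rw [hw, ContinuousMap.prod_apply, map_prod]
      calc ∏ j ∈ s, Complex.abs (F j t)
          = Complex.abs (F i t) * ∏ j ∈ s.erase i, Complex.abs (F j t) := by
            exact (Finset.mul_prod_erase s _ his).symm
        _ ≤ Complex.abs (F i t) * 1 := by
            apply mul_le_mul_of_nonneg_left _ (Complex.abs.nonneg _)
            exact Finset.prod_le_one (fun j _ => Complex.abs.nonneg _) (fun j _ => habs j t)
        _ < 1 := by simpa using hlt
    intro hcon
    rw [hcon] at this
    simp at this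
  -- extract γ
  rcases Set.eq_empty_or_nonempty Uᶜ with hUce | hUcne
  · refine ⟨w, hwmem, hwabs, hwx, 1, one_pos, le_refl 1, ?_⟩
    intro t htU
    exact absurd (show t ∈ Uᶜ from htU) (by rw [hUce]; exact Set.notMem_empty t)
  · have hcont : Continuous (fun t => Complex.abs (1 - w t)) := by
      continuity
    obtain ⟨t₀, ht₀, hmin⟩ := hUc.exists_isMinOn hUcne hcont.continuousOn
    have hpos : 0 < Complex.abs (1 - w t₀) := by
      rw [AbsoluteValue.pos_iff]
      intro hcon
      apply hwne t₀ ht₀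
      have : (1 : ℂ) = w t₀ := by linear_combination hcon
      exact this.symm
    refine ⟨w, hwmem, hwabs, hwx, min 1 (Complex.abs (1 - w t₀)), by positivity,
      min_le_left _ _, ?_⟩
    intro t htU
    exact le_trans (min_le_right _ _) (hmin htU)


lemma log_one_sub_mem {A : Subalgebra ℂ C(X, ℂ)} (hA : IsClosed (A : Set C(X, ℂ)))
    {q : C(X, ℂ)} (hq : q ∈ A) {c : ℝ} (hc0 : 0 ≤ c) (hc1 : c < 1)
    (hqc : ∀ t, Complex.abs (q t) ≤ c) :
    ∃ l : C(X, ℂ), l ∈ A ∧ ∀ t, l t = Complex.log (1 - q t) := by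
  set F : ℕ → C(X, ℂ) := fun n => ((n : ℂ))⁻¹ • q ^ n with hF
  have hFnorm : ∀ n, ‖F n‖ ≤ c ^ n := by
    intro n
    rcases Nat.eq_zero_or_pos n with rfl | hn
    · simp [hF]
    have h1 : ‖q ^ n‖ ≤ c ^ n := by
      rw [ContinuousMap.norm_le _ (by positivity)]
      intro t
      rw [ContinuousMap.pow_apply, norm_pow]
      apply pow_le_pow_left₀ (norm_nonneg _) _ n
      rw [Complex.norm_eq_abs]; exact hqc t
    calc ‖F n‖ = ‖((n:ℂ))⁻¹‖ * ‖q ^ n‖ := norm_smul _ _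
      _ ≤ 1 * (c ^ n) := by
          apply mul_le_mul _ h1 (norm_nonneg _) zero_le_one
          rw [norm_inv, Complex.norm_natCast]
          rw [inv_le_one_iff₀]
          right; exact_mod_cast hn
      _ = c ^ n := one_mul _
  have hsummable : Summable F := by
    apply Summable.of_norm
    exact Summable.of_nonneg_of_le (fun n => norm_nonneg _) hFnorm
      (summable_geometric_of_lt_one hc0 hc1)
  have hgmem : (∑' n, F n) ∈ A := by
    refine hA.mem_of_tendsto hsummable.hasSum.tendsto_sum_nat
      (Filter.Eventually.of_forall fun n => ?_)
    exact Subalgebra.sum_mem A fun i _ => Subalgebra.smul_mem A (Subalgebra.pow_mem A hq i) _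
  refine ⟨-(∑' n, F n), A.neg_mem hgmem, fun t => ?_⟩
  have h1 : HasSum (fun n => F n t) ((∑' n, F n) t) := hasSum_apply hsummable.hasSum t
  have h2 : HasSum (fun n : ℕ => (q t) ^ n / n) (-Complex.log (1 - q t)) :=
    Complex.hasSum_taylorSeries_neg_log
      (by rw [Complex.norm_eq_abs]; exact lt_of_le_of_lt (hqc t) hc1)
  have h3 : (fun n => F n t) = fun n : ℕ => (q t) ^ n / n := by
    funext n; simp [hF, div_eq_inv_mul]
  rw [h3] at h1
  have h4 := h1.unique h2
  rw [ContinuousMap.neg_apply, h4, neg_neg]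

lemma exp_mem {A : Subalgebra ℂ C(X, ℂ)} (hA : IsClosed (A : Set C(X, ℂ)))
    {a : C(X, ℂ)} (ha : a ∈ A) :
    ∃ E : C(X, ℂ), E ∈ A ∧ ∀ t, E t = Complex.exp (a t) := by
  have hs : HasSum (fun n => ((n.factorial : ℂ))⁻¹ • a ^ n) (NormedSpace.exp a) :=
    NormedSpace.exp_series_hasSum_exp' (𝕂 := ℂ) a
  refine ⟨NormedSpace.exp a, ?_, ?_⟩
  · refine hA.mem_of_tendsto hs.tendsto_sum_nat (Filter.Eventually.of_forall fun n => ?_)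
    exact Subalgebra.sum_mem A fun i _ => Subalgebra.smul_mem A (Subalgebra.pow_mem A ha i) _
  · intro t
    have h1 := hasSum_apply hs t
    have h2 : HasSum (fun n => ((n.factorial : ℂ))⁻¹ • (a t) ^ n) (NormedSpace.exp (a t)) :=
      NormedSpace.exp_series_hasSum_exp' (𝕂 := ℂ) (a t)
    have h3 : (fun n => (((n.factorial : ℂ))⁻¹ • a ^ n) t)
        = fun n => ((n.factorial : ℂ))⁻¹ • (a t) ^ n := by
      funext n; simp
    rw [h3] at h1
    rw [h1.unique h2, Complex.exp_eq_exp_ℂ]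


lemma exists_gadget {A : Subalgebra ℂ C(X, ℂ)} (hA : IsClosed (A : Set C(X, ℂ)))
    {x : X} (hx : x ∈ choquetBdry A) {U : Set X} (hU : IsOpen U) (hxU : x ∈ U)
    {ε : ℝ} (hε : 0 < ε) (hε1 : ε ≤ 1) :
    ∃ v : C(X, ℂ), v ∈ A ∧ (∀ t, Complex.abs (v t) ≤ 1) ∧ v x = 1 ∧
      (∀ t, ∃ s : ℝ, 0 ≤ s ∧ s ≤ 1 ∧ Complex.abs (v t - (s : ℂ)) ≤ ε) ∧
      (∀ t, t ∉ U → Complex.abs (v t) ≤ ε) := by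
  obtain ⟨w, hwA, hwabs, hwx, γ, hγ0, hγ1, hγ⟩ := peak_localize A hx hU hxU
  set β : ℝ := ε / 4 with hβ
  have hβ0 : 0 < β := by positivity
  have hβ14 : β ≤ 1 / 4 := by rw [hβ]; linarith
  set d : ℝ := γ / 8 * Real.exp (Real.log ε / β) with hd
  have hd0 : 0 < d := by positivity
  have hdγ : d ≤ γ / 8 := by
    rw [hd]
    nth_rewrite 2 [← mul_one (γ / 8)]
    apply mul_le_mul_of_nonneg_left _ (by positivity)
    rw [Real.exp_le_one_iff]
    exact div_nonpos_of_nonpos_of_nonneg (Real.log_nonpos hε.le hε1) hβ0.le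
  have hd18 : d ≤ 1 / 8 := le_trans hdγ (by linarith)
  set c : ℝ := 1 - d with hc
  have hc0 : (0:ℝ) < c := by rw [hc]; linarith
  have hc12 : 1 / 2 ≤ c := by rw [hc]; linarith
  have hc1 : c < 1 := by rw [hc]; linarith
  -- the function q
  set q : C(X, ℂ) := ((c / 2 : ℝ) : ℂ) • (1 + w) with hq
  have hqA : q ∈ A := Subalgebra.smul_mem A (Subalgebra.add_mem A (Subalgebra.one_mem A) hwA) _
  have hqval : ∀ t, q t = ((c / 2 : ℝ) : ℂ) * (1 + w t) := by
    intro t; rw [hq]; simp; push_cast; ring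
  have hqabs : ∀ t, Complex.abs (q t) ≤ c := by
    intro t
    rw [hqval, map_mul, Complex.abs_ofReal, abs_of_pos (by positivity)]
    calc c / 2 * Complex.abs (1 + w t) ≤ c / 2 * (1 + 1) := by
          apply mul_le_mul_of_nonneg_left _ (by positivity)
          calc Complex.abs (1 + w t) ≤ Complex.abs 1 + Complex.abs (w t) := Complex.abs.add_le _ _
            _ ≤ 1 + 1 := by simpa using hwabs t
      _ = c := by ring
  have hqx : q x = (c : ℂ) := by
    rw [hqval, hwx]
    push_cast; ring
  -- lower bounds for |1 - q t|
  have habs_ge_d : ∀ t, d ≤ Complex.abs (1 - q t) := by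
    intro t
    have h1 : Complex.abs 1 - Complex.abs (q t) ≤ Complex.abs (1 - q t) := by
      simpa [Complex.norm_eq_abs] using norm_sub_norm_le (1 : ℂ) (q t)
    have := hqabs t
    simp only [map_one] at h1
    rw [hc] at this
    linarith
  have habs_pos : ∀ t, 0 < Complex.abs (1 - q t) := fun t => lt_of_lt_of_le hd0 (habs_ge_d t)
  have hre_pos : ∀ t, 0 ≤ (1 - q t).re := by
    intro t
    have h1 : (1 - q t).re = 1 - (q t).re := by simp
    have h2 : (q t).re ≤ Complex.abs (q t) := Complex.re_le_abs _
    have := hqabs t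
    rw [h1]; linarith
  -- build v
  obtain ⟨l, hlA, hlval⟩ := log_one_sub_mem hA hqA hc0.le hc1 hqabs
  set a : C(X, ℂ) := ((-β : ℝ) : ℂ) • l with ha
  have haA : a ∈ A := Subalgebra.smul_mem A hlA _
  obtain ⟨E, hEA, hEval⟩ := exp_mem hA haA
  set r₀ : ℝ := Real.exp (β * Real.log d) with hr₀
  have hr₀0 : 0 < r₀ := Real.exp_pos _
  have hvval : ∀ t, (((r₀ : ℝ) : ℂ) • E) t
      = (r₀ : ℂ) * Complex.exp (((-β : ℝ) : ℂ) * Complex.log (1 - q t)) := by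
    intro t
    rw [ContinuousMap.smul_apply, smul_eq_mul, hEval, ha, ContinuousMap.smul_apply,
      smul_eq_mul, hlval]
  have hζre : ∀ t, (((-β : ℝ) : ℂ) * Complex.log (1 - q t)).re
      = -β * Real.log (Complex.abs (1 - q t)) := by
    intro t
    rw [Complex.mul_re, Complex.ofReal_re, Complex.ofReal_im, Complex.log_re, Complex.norm_eq_abs]
    ring
  have hζim : ∀ t, (((-β : ℝ) : ℂ) * Complex.log (1 - q t)).im
      = -β * Complex.arg (1 - q t) := by
    intro t
    rw [Complex.mul_im, Complex.ofReal_re, Complex.ofReal_im, Complex.log_im]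
    ring
  have hvabs : ∀ t, Complex.abs ((((r₀ : ℝ) : ℂ) • E) t)
      = Real.exp (β * (Real.log d - Real.log (Complex.abs (1 - q t)))) := by
    intro t
    rw [hvval, map_mul, Complex.abs_ofReal, abs_of_pos hr₀0, Complex.abs_exp, hζre, hr₀,
      ← Real.exp_add]
    congr 1
    ring
  have hvabs_le : ∀ t, Complex.abs ((((r₀ : ℝ) : ℂ) • E) t) ≤ 1 := by
    intro t
    rw [hvabs, Real.exp_le_one_iff]
    have h1 : Real.log d ≤ Real.log (Complex.abs (1 - q t)) :=
      (Real.log_le_log_iff hd0 (habs_pos t)).mpr (habs_ge_d t)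
    nlinarith
  refine ⟨((r₀ : ℝ) : ℂ) • E, Subalgebra.smul_mem A hEA _, hvabs_le, ?_, ?_, ?_⟩
  · -- v x = 1
    rw [hvval]
    have h1 : (1 : ℂ) - q x = ((d : ℝ) : ℂ) := by
      rw [hqx, hc]; push_cast; ring
    rw [h1, ← Complex.ofReal_log hd0.le, ← Complex.ofReal_mul, hr₀, Complex.ofReal_exp,
      ← Complex.exp_add, ← Complex.ofReal_add]
    norm_num
  · -- phase
    intro t
    set ζ : ℂ := ((-β : ℝ) : ℂ) * Complex.log (1 - q t) with hζ
    set s : ℝ := Real.exp (β * (Real.log d - Real.log (Complex.abs (1 - q t)))) with hs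
    have hs0 : 0 < s := Real.exp_pos _
    have hs1 : s ≤ 1 := by
      have := hvabs_le t
      rw [hvabs] at this
      exact this
    refine ⟨s, hs0.le, hs1, ?_⟩
    have hsplit : (((r₀ : ℝ) : ℂ) • E) t = (s : ℂ) * Complex.exp ((ζ.im : ℝ) * I) := by
      rw [hvval, ← hζ]
      have hexpζ : Complex.exp ζ = Real.exp ζ.re * Complex.exp (ζ.im * I) := by
        rw [Complex.ofReal_exp, ← Complex.exp_add]
        congr 1
        simp [Complex.re_add_im]
      rw [hexpζ, hs, hζre, ← mul_assoc]
      congr 1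
      rw [← Complex.ofReal_mul]
      norm_cast
      rw [← Real.exp_add]
      congr 1
      ring
    have harg : |ζ.im| ≤ β * (Real.pi / 2) := by
      rw [hζ, hζim]
      rw [abs_mul, abs_neg, abs_of_pos hβ0]
      apply mul_le_mul_of_nonneg_left _ hβ0.le
      exact Complex.abs_arg_le_pi_div_two_iff.mpr (hre_pos t)
    have hargle1 : Complex.abs ((ζ.im : ℝ) * I) ≤ 1 := by
      rw [map_mul, Complex.abs_I, mul_one, Complex.abs_ofReal]
      have hπ : Real.pi ≤ 4 := Real.pi_le_four
      calc |ζ.im| ≤ β * (Real.pi / 2) := harg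
        _ ≤ (1/4) * (4/2) := by
            apply mul_le_mul hβ14 (by linarith) (by positivity) (by norm_num)
        _ ≤ 1 := by norm_num
    calc Complex.abs ((((r₀ : ℝ) : ℂ) • E) t - (s : ℂ))
        = Complex.abs ((s : ℂ) * (Complex.exp ((ζ.im : ℝ) * I) - 1)) := by
          rw [hsplit]; congr 1; ring
      _ = s * Complex.abs (Complex.exp ((ζ.im : ℝ) * I) - 1) := by
          rw [map_mul, Complex.abs_ofReal, abs_of_pos hs0]
      _ ≤ 1 * (2 * Complex.abs ((ζ.im : ℝ) * I)) := by
          apply mul_le_mul hs1 (Complex.abs_exp_sub_one_le hargle1)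
            (Complex.abs.nonneg _) zero_le_one
      _ = 2 * |ζ.im| := by rw [map_mul, Complex.abs_I, mul_one, Complex.abs_ofReal]; ring
      _ ≤ 2 * (β * (Real.pi / 2)) := by linarith [harg]
      _ = β * Real.pi := by ring
      _ ≤ β * 4 := by nlinarith [Real.pi_le_four, hβ0]
      _ = ε := by rw [hβ]; ring
  · -- off U
    intro t htU
    rw [hvabs]
    have h8 : γ / 8 ≤ Complex.abs (1 - q t) := by
      have h1 : γ ≤ Complex.abs (1 - w t) := hγ t htU
      -- 1 - q t = (c/2) (1 - w t) + (1 - c)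
      have h2 : (1 : ℂ) - q t = ((c / 2 : ℝ) : ℂ) * (1 - w t) + ((1 - c : ℝ) : ℂ) := by
        rw [hqval]; push_cast; ring
      have h3 : Complex.abs (((c / 2 : ℝ) : ℂ) * (1 - w t))
          - Complex.abs (((1 - c : ℝ) : ℂ)) ≤ Complex.abs (1 - q t) := by
        rw [h2]
        have := Complex.abs.add_le (((c / 2 : ℝ) : ℂ) * (1 - w t) + ((1 - c : ℝ) : ℂ))
          (-((1 - c : ℝ) : ℂ))
        simp only [add_neg_cancel_right, Complex.abs.map_neg] at this
        linarith [this]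
      rw [map_mul, Complex.abs_ofReal, Complex.abs_ofReal, abs_of_pos (by positivity),
        abs_of_pos (by rw [hc]; simpa using hd0)] at h3
      have h4 : c / 2 * γ ≤ c / 2 * Complex.abs (1 - w t) :=
        mul_le_mul_of_nonneg_left h1 (by positivity)
      have h5 : 1 - c = d := by rw [hc]; ring
      rw [h5] at h3
      nlinarith
    have h6 : Real.log (γ / 8) ≤ Real.log (Complex.abs (1 - q t)) :=
      (Real.log_le_log_iff (by positivity) (habs_pos t)).mpr h8
    have h7 : Real.log d = Real.log (γ / 8) + Real.log ε / β := by
      rw [hd, Real.log_mul (by positivity) (Real.exp_pos _).ne', Real.log_exp]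
    calc Real.exp (β * (Real.log d - Real.log (Complex.abs (1 - q t))))
        ≤ Real.exp (β * (Real.log ε / β)) := by
          apply Real.exp_le_exp.mpr
          apply mul_le_mul_of_nonneg_left _ hβ0.le
          rw [h7]; linarith
      _ = ε := by
          rw [mul_div_cancel₀ _ hβ0.ne', Real.exp_log hε]


/-- convexity bound : |μ - lam*s| ≤ max |μ| |μ - lam| for s ∈ [0,1] -/
lemma seg_bound (μ lam : ℂ) {s : ℝ} (h0 : 0 ≤ s) (h1 : s ≤ 1) :
    Complex.abs (μ - lam * s) ≤ max (Complex.abs μ) (Complex.abs (μ - lam)) := by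
  have h : μ - lam * s = ((1 - s : ℝ) : ℂ) * μ + (s : ℂ) * (μ - lam) := by
    push_cast; ring
  have h2 : Complex.abs (μ - lam * s) ≤ (1 - s) * Complex.abs μ + s * Complex.abs (μ - lam) := by
    rw [h]
    refine le_trans (Complex.abs.add_le _ _) ?_
    rw [map_mul, map_mul, Complex.abs_ofReal, Complex.abs_ofReal,
      _root_.abs_of_nonneg (by linarith : (0:ℝ) ≤ 1 - s), _root_.abs_of_nonneg h0]
  have hmax1 := le_max_left (Complex.abs μ) (Complex.abs (μ - lam))
  have hmax2 := le_max_right (Complex.abs μ) (Complex.abs (μ - lam))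
  nlinarith [Complex.abs.nonneg μ, Complex.abs.nonneg (μ - lam)]

lemma exists_slice_approx {A : Subalgebra ℂ C(X, ℂ)} (hA : IsClosed (A : Set C(X, ℂ)))
    {x : X} (hx : x ∈ choquetBdry A) {f : C(X, ℂ)} (hf : f ∈ A) (hfn : ‖f‖ = 1)
    {lam : ℂ} (hlam : Complex.abs lam = 1) {ε : ℝ} (hε : 0 < ε) :
    ∃ g : C(X, ℂ), g ∈ uaSlice A x lam ∧
      ‖f - g‖ ≤ max 1 (Complex.abs (f x - lam)) + ε := by
  set ε' : ℝ := min (ε / 3) 1 with hε'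
  have hε'0 : 0 < ε' := by
    rw [hε']; apply lt_min (by linarith) one_pos
  have hε'1 : ε' ≤ 1 := min_le_right _ _
  have hε'3 : 3 * ε' ≤ ε := by
    have : ε' ≤ ε / 3 := min_le_left _ _
    linarith
  set U : Set X := {t | Complex.abs (f t - f x) < ε'} with hU
  have hUopen : IsOpen U := by
    have hcont : Continuous fun t => Complex.abs (f t - f x) :=
      (Complex.continuous_abs.comp ((map_continuous f).sub continuous_const))
    exact isOpen_lt hcont continuous_const
  have hxU : x ∈ U := by
    simp [hU, hε'0]
  obtain ⟨v, hvA, hvabs, hvx, hvphase, hvoff⟩ := exists_gadget hA hx hUopen hxU hε'0 hε'1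
  refine ⟨lam • v, ⟨⟨Subalgebra.smul_mem A hvA _, ?_⟩, ?_⟩, ?_⟩
  · -- norm one
    apply le_antisymm
    · rw [ContinuousMap.norm_le _ zero_le_one]
      intro t
      rw [ContinuousMap.smul_apply, smul_eq_mul, Complex.norm_eq_abs, map_mul, hlam, one_mul]
      exact hvabs t
    · have := ContinuousMap.norm_coe_le_norm (lam • v) x
      rw [ContinuousMap.smul_apply, smul_eq_mul, hvx, mul_one, Complex.norm_eq_abs, hlam] at this
      exact this
  · rw [ContinuousMap.smul_apply, smul_eq_mul, hvx, mul_one]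
  · have hM0 : (0:ℝ) ≤ max 1 (Complex.abs (f x - lam)) + ε := by positivity
    rw [ContinuousMap.norm_le _ hM0]
    intro t
    rw [ContinuousMap.sub_apply, ContinuousMap.smul_apply, smul_eq_mul, Complex.norm_eq_abs]
    have hfa : ∀ u, Complex.abs (f u) ≤ 1 := by
      intro u
      have := ContinuousMap.norm_coe_le_norm f u
      rw [hfn, Complex.norm_eq_abs] at this
      exact this
    by_cases ht : t ∈ U
    · obtain ⟨s, hs0, hs1, hsphase⟩ := hvphase t
      calc Complex.abs (f t - lam * v t)
          ≤ Complex.abs (f t - f x) + Complex.abs (f x - lam * (s : ℂ))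
            + Complex.abs (lam * (s : ℂ) - lam * v t) := by
            have h1 : f t - lam * v t = (f t - f x) + (f x - lam * (s : ℂ))
                + (lam * (s : ℂ) - lam * v t) := by ring
            rw [h1]
            exact le_trans (Complex.abs.add_le _ _)
              (by gcongr; exact Complex.abs.add_le _ _)
        _ ≤ ε' + max (Complex.abs (f x)) (Complex.abs (f x - lam)) + ε' := by
            gcongr
            · exact le_of_lt ht
            · exact seg_bound _ _ hs0 hs1
            · have h2 : lam * (s : ℂ) - lam * v t = lam * ((s : ℂ) - v t) := by ring
              rw [h2, map_mul, hlam, one_mul, ← Complex.abs.map_neg]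
              simpa [neg_sub] using hsphase
        _ ≤ max 1 (Complex.abs (f x - lam)) + ε := by
            have h3 : max (Complex.abs (f x)) (Complex.abs (f x - lam))
                ≤ max 1 (Complex.abs (f x - lam)) := max_le_max (hfa x) (le_refl _)
            linarith
    · calc Complex.abs (f t - lam * v t)
          ≤ Complex.abs (f t) + Complex.abs (lam * v t) := by
            have h1 : f t - lam * v t = f t + -(lam * v t) := by ring
            rw [h1]
            exact le_trans (Complex.abs.add_le _ _) (by rw [Complex.abs.map_neg])
        _ ≤ 1 + ε' := by
            gcongr
            · exact hfa t
            · rw [map_mul, hlam, one_mul]; exact hvoff t ht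
        _ ≤ max 1 (Complex.abs (f x - lam)) + ε := by
            have := le_max_left 1 (Complex.abs (f x - lam))
            linarith


/-- If Re ξ = |ξ| then ξ is the nonneg real |ξ|. -/
lemma eq_abs_of_re_eq_abs {ξ : ℂ} (h : ξ.re = Complex.abs ξ) : ξ = ((Complex.abs ξ : ℝ) : ℂ) := by
  have h2 : ξ.im = 0 := by
    have h3 := Complex.sq_abs ξ
    rw [Complex.normSq_apply] at h3
    have h4 : ξ.re * ξ.re = Complex.abs ξ ^ 2 := by rw [h]; ring
    apply mul_self_eq_zero.mp
    linarith
  apply Complex.ext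
  · rw [h, Complex.ofReal_re]
  · rw [h2, Complex.ofReal_im]

lemma circle_pinch {z w : ℂ} (hz : Complex.abs z ≤ 1) (hw : Complex.abs w ≤ 1)
    (H1 : ∀ lam : ℂ, Complex.abs lam = 1 →
      Complex.abs (z - lam) ≤ max 1 (Complex.abs (w - lam)))
    (H2 : ∀ lam : ℂ, Complex.abs lam = 1 →
      Complex.abs (w - lam) ≤ max 1 (Complex.abs (z - lam))) : z = w := by
  -- key step
  have key : ∀ a b : ℂ, a ≠ 0 →
      (∀ lam : ℂ, Complex.abs lam = 1 →
        Complex.abs (a - lam) ≤ max 1 (Complex.abs (b - lam))) →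
      1 + Complex.abs a ≤ Complex.abs (b + a / Complex.abs a) := by
    intro a b ha H
    have haa : (0:ℝ) < Complex.abs a := Complex.abs.pos ha
    set lam : ℂ := -(a / Complex.abs a) with hlam
    have hlam1 : Complex.abs lam = 1 := by
      rw [hlam, Complex.abs.map_neg, map_div₀, Complex.abs_ofReal, abs_of_pos haa,
        div_self haa.ne']
    have hdist : Complex.abs (a - lam) = 1 + Complex.abs a := by
      rw [hlam, sub_neg_eq_add]
      have h1 : a + a / Complex.abs a = a * (1 + ((Complex.abs a : ℝ):ℂ)⁻¹) := by
        rw [mul_add, mul_one, div_eq_mul_inv]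
      rw [h1, map_mul]
      have h2 : Complex.abs (1 + ((Complex.abs a : ℝ):ℂ)⁻¹) = 1 + (Complex.abs a)⁻¹ := by
        rw [← Complex.ofReal_one, ← Complex.ofReal_inv, ← Complex.ofReal_add,
          Complex.abs_ofReal]
        rw [_root_.abs_of_pos (by positivity)]
      rw [h2]
      field_simp
      ring
    have h3 := H lam hlam1
    rw [hdist] at h3
    have h4 : 1 < 1 + Complex.abs a := by linarith
    have h5 : Complex.abs (b - lam) ≥ 1 + Complex.abs a := by
      rcases max_cases 1 (Complex.abs (b - lam)) with ⟨he, hc⟩ | ⟨he, hc⟩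
      · rw [he] at h3; linarith
      · rw [he] at h3; exact h3
    rw [hlam, sub_neg_eq_add] at h5
    exact h5
  by_cases hz0 : z = 0
  · by_cases hw0 : w = 0
    · rw [hz0, hw0]
    · exfalso
      have h1 := key w z hw0 H2
      rw [hz0, zero_add, map_div₀, Complex.abs_ofReal,
        _root_.abs_of_pos (Complex.abs.pos hw0), div_self (Complex.abs.pos hw0).ne'] at h1
      have := Complex.abs.pos hw0
      linarith
  · have hw0 : w ≠ 0 := by
      intro hw0
      have h1 := key z w hz0 H1
      rw [hw0, zero_add, map_div₀, Complex.abs_ofReal,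
        _root_.abs_of_pos (Complex.abs.pos hz0), div_self (Complex.abs.pos hz0).ne'] at h1
      have := Complex.abs.pos hz0
      linarith
    have h1 := key z w hz0 H1
    have h2 := key w z hw0 H2
    -- |w| ≥ |z| and |z| ≥ |w|
    have h3 : Complex.abs (w + z / Complex.abs z) ≤ Complex.abs w + 1 := by
      refine le_trans (Complex.abs.add_le _ _) ?_
      rw [map_div₀, Complex.abs_ofReal, _root_.abs_of_pos (Complex.abs.pos hz0),
        div_self (Complex.abs.pos hz0).ne']
    have h4 : Complex.abs (z + w / Complex.abs w) ≤ Complex.abs z + 1 := by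
      refine le_trans (Complex.abs.add_le _ _) ?_
      rw [map_div₀, Complex.abs_ofReal, _root_.abs_of_pos (Complex.abs.pos hw0),
        div_self (Complex.abs.pos hw0).ne']
    have hzw : Complex.abs z = Complex.abs w := by linarith
    -- equality case
    set u : ℂ := z / Complex.abs z with hu
    have hu1 : Complex.abs u = 1 := by
      rw [hu, map_div₀, Complex.abs_ofReal, _root_.abs_of_pos (Complex.abs.pos hz0),
        div_self (Complex.abs.pos hz0).ne']
    have heq : Complex.abs (w + u) = Complex.abs w + 1 := by
      apply le_antisymm h3
      calc Complex.abs w + 1 = 1 + Complex.abs z := by rw [hzw]; ring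
        _ ≤ Complex.abs (w + u) := h1
    -- from equality derive w * conj u = |w|
    have hre : (w * (starRingEnd ℂ) u).re = Complex.abs w := by
      have hsq := congrArg (fun r => r ^ 2) heq
      rw [Complex.sq_abs] at hsq
      have hns : Complex.normSq (w + u) = Complex.normSq w + Complex.normSq u
          + 2 * (w * (starRingEnd ℂ) u).re := Complex.normSq_add w u
      rw [hns] at hsq
      have hnu : Complex.normSq u = 1 := by
        have := Complex.sq_abs u; rw [hu1] at this; nlinarith
      have hnw : Complex.normSq w = (Complex.abs w) ^ 2 := (Complex.sq_abs w).symm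
      nlinarith
    have habswu : Complex.abs (w * (starRingEnd ℂ) u) = Complex.abs w := by
      rw [map_mul, Complex.abs_conj, hu1, mul_one]
    have : w * (starRingEnd ℂ) u = ((Complex.abs w : ℝ) : ℂ) := by
      have := eq_abs_of_re_eq_abs (ξ := w * (starRingEnd ℂ) u) (by rw [habswu, hre])
      rw [habswu] at this
      exact this
    -- multiply by u
    have hw_eq : w = ((Complex.abs w : ℝ) : ℂ) * u := by
      have hcu : (starRingEnd ℂ) u * u = 1 := by
        rw [mul_comm, Complex.mul_conj]
        norm_cast
        have := Complex.sq_abs u; rw [hu1] at this; nlinarith [Complex.normSq_nonneg u]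
      calc w = w * ((starRingEnd ℂ) u * u) := by rw [hcu, mul_one]
        _ = (w * (starRingEnd ℂ) u) * u := by ring
        _ = ((Complex.abs w : ℝ) : ℂ) * u := by rw [this]
    have hz_eq : z = ((Complex.abs z : ℝ) : ℂ) * u := by
      rw [hu, mul_comm, div_mul_cancel₀]
      exact_mod_cast (Complex.abs.pos hz0).ne'
    rw [hw_eq, hz_eq, hzw]



lemma circle_rot_plus {t1 tl lam : ℂ} (ht1 : Complex.abs t1 = 1) (htl : Complex.abs tl = 1)
    (hl : Complex.abs lam = 1)
    (h1 : Complex.abs (tl - t1) = Complex.abs (lam - 1))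
    (h2 : Complex.abs (tl - Complex.I * t1) = Complex.abs (lam - Complex.I)) :
    tl = t1 * lam := by
  have hconj : (starRingEnd ℂ) t1 * t1 = 1 := by
    rw [mul_comm, Complex.mul_conj]
    norm_cast
    rw [Complex.normSq_eq_abs, ht1]; norm_num
  set ζ : ℂ := (starRingEnd ℂ) t1 * tl with hζ
  have hζabs : Complex.abs ζ = 1 := by
    rw [hζ, map_mul, Complex.abs_conj, ht1, htl]; ring
  have e1' : Complex.abs (ζ - 1) = Complex.abs (lam - 1) := by
    have hsub : ζ - 1 = (starRingEnd ℂ) t1 * (tl - t1) := by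
      rw [mul_sub, hconj, hζ]
    rw [hsub, map_mul, Complex.abs_conj, ht1, one_mul, h1]
  have e2' : Complex.abs (ζ - Complex.I) = Complex.abs (lam - Complex.I) := by
    have hsub : ζ - Complex.I = (starRingEnd ℂ) t1 * (tl - Complex.I * t1) := by
      rw [mul_sub, hζ]
      have : (starRingEnd ℂ) t1 * (Complex.I * t1) = Complex.I := by
        rw [mul_comm Complex.I, ← mul_assoc, hconj, one_mul]
      rw [this]
    rw [hsub, map_mul, Complex.abs_conj, ht1, one_mul, h2]
  have hζsq : ζ.re * ζ.re + ζ.im * ζ.im = 1 := by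
    have h := Complex.sq_abs ζ
    rw [hζabs, Complex.normSq_apply] at h
    nlinarith
  have hlamsq : lam.re * lam.re + lam.im * lam.im = 1 := by
    have h := Complex.sq_abs lam
    rw [hl, Complex.normSq_apply] at h
    nlinarith
  have e1 : Complex.normSq (ζ - 1) = Complex.normSq (lam - 1) := by
    rw [← Complex.sq_abs, ← Complex.sq_abs, e1']
  have e2 : Complex.normSq (ζ - Complex.I) = Complex.normSq (lam - Complex.I) := by
    rw [← Complex.sq_abs, ← Complex.sq_abs, e2']
  rw [Complex.normSq_apply, Complex.normSq_apply] at e1 e2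
  simp only [Complex.sub_re, Complex.sub_im, Complex.one_re, Complex.one_im,
    Complex.I_re, Complex.I_im] at e1 e2
  have hre : ζ.re = lam.re := by nlinarith
  have him : ζ.im = lam.im := by nlinarith
  have hζlam : ζ = lam := Complex.ext hre him
  calc tl = (t1 * (starRingEnd ℂ) t1) * tl := by
        rw [mul_comm t1, hconj, one_mul]
    _ = t1 * ζ := by rw [hζ]; ring
    _ = t1 * lam := by rw [hζlam]

lemma circle_rot_minus {t1 tl lam : ℂ} (ht1 : Complex.abs t1 = 1) (htl : Complex.abs tl = 1)
    (hl : Complex.abs lam = 1)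
    (h1 : Complex.abs (tl - t1) = Complex.abs (lam - 1))
    (h2 : Complex.abs (tl - (-Complex.I) * t1) = Complex.abs (lam - Complex.I)) :
    tl = t1 * (starRingEnd ℂ) lam := by
  have hconj : (starRingEnd ℂ) t1 * t1 = 1 := by
    rw [mul_comm, Complex.mul_conj]
    norm_cast
    rw [Complex.normSq_eq_abs, ht1]; norm_num
  set ζ : ℂ := (starRingEnd ℂ) t1 * tl with hζ
  have hζabs : Complex.abs ζ = 1 := by
    rw [hζ, map_mul, Complex.abs_conj, ht1, htl]; ring
  have e1' : Complex.abs (ζ - 1) = Complex.abs (lam - 1) := by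
    have hsub : ζ - 1 = (starRingEnd ℂ) t1 * (tl - t1) := by
      rw [mul_sub, hconj, hζ]
    rw [hsub, map_mul, Complex.abs_conj, ht1, one_mul, h1]
  have e2' : Complex.abs (ζ + Complex.I) = Complex.abs (lam - Complex.I) := by
    have hsub : ζ + Complex.I = (starRingEnd ℂ) t1 * (tl - (-Complex.I) * t1) := by
      rw [mul_sub, hζ]
      have : (starRingEnd ℂ) t1 * ((-Complex.I) * t1) = -Complex.I := by
        rw [mul_comm (-Complex.I), ← mul_assoc, hconj, one_mul]
      rw [this, sub_neg_eq_add]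
    rw [hsub, map_mul, Complex.abs_conj, ht1, one_mul, h2]
  have hζsq : ζ.re * ζ.re + ζ.im * ζ.im = 1 := by
    have h := Complex.sq_abs ζ
    rw [hζabs, Complex.normSq_apply] at h
    nlinarith
  have hlamsq : lam.re * lam.re + lam.im * lam.im = 1 := by
    have h := Complex.sq_abs lam
    rw [hl, Complex.normSq_apply] at h
    nlinarith
  have e1 : Complex.normSq (ζ - 1) = Complex.normSq (lam - 1) := by
    rw [← Complex.sq_abs, ← Complex.sq_abs, e1']
  have e2 : Complex.normSq (ζ + Complex.I) = Complex.normSq (lam - Complex.I) := by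
    rw [← Complex.sq_abs, ← Complex.sq_abs, e2']
  rw [Complex.normSq_apply, Complex.normSq_apply] at e1 e2
  simp only [Complex.sub_re, Complex.sub_im, Complex.add_re, Complex.add_im,
    Complex.one_re, Complex.one_im, Complex.I_re, Complex.I_im] at e1 e2
  have hre : ζ.re = lam.re := by nlinarith
  have him : ζ.im = -lam.im := by nlinarith
  have hζlam : ζ = (starRingEnd ℂ) lam := by
    apply Complex.ext
    · rw [Complex.conj_re]; exact hre
    · rw [Complex.conj_im]; exact him
  calc tl = (t1 * (starRingEnd ℂ) t1) * tl := by
        rw [mul_comm t1, hconj, one_mul]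
    _ = t1 * ζ := by rw [hζ]; ring
    _ = t1 * (starRingEnd ℂ) lam := by rw [hζlam]

lemma abs_apply_sub_le {Z : Type*} [TopologicalSpace Z] [CompactSpace Z]
    (g h : C(Z, ℂ)) (t : Z) : Complex.abs (g t - h t) ≤ ‖g - h‖ := by
  have := ContinuousMap.norm_coe_le_norm (g - h) t
  rwa [ContinuousMap.sub_apply, Complex.norm_eq_abs] at this

lemma norm_const_eq' {Z : Type*} [TopologicalSpace Z] [CompactSpace Z] [Nonempty Z]
    (a : ℂ) : ‖ContinuousMap.const Z a‖ = Complex.abs a := by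
  apply le_antisymm
  · rw [ContinuousMap.norm_le _ (Complex.abs.nonneg a)]
    intro t
    simp [Complex.norm_eq_abs]
  · have := ContinuousMap.norm_coe_le_norm (ContinuousMap.const Z a) (Classical.arbitrary Z)
    simpa [Complex.norm_eq_abs] using this

lemma norm_const_sub {Z : Type*} [TopologicalSpace Z] [CompactSpace Z] [Nonempty Z]
    (a b : ℂ) : ‖ContinuousMap.const Z a - ContinuousMap.const Z b‖ = Complex.abs (a - b) := by
  have h : ContinuousMap.const Z a - ContinuousMap.const Z b = ContinuousMap.const Z (a - b) := by
    ext t; simp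
  rw [h, norm_const_eq']

lemma const_mem_sphere {Z : Type*} [TopologicalSpace Z] [CompactSpace Z] [Nonempty Z]
    (A : Subalgebra ℂ C(Z, ℂ)) {lam : ℂ} (hl : Complex.abs lam = 1) :
    ContinuousMap.const Z lam ∈ uaSphere A := by
  constructor
  · have h : ContinuousMap.const Z lam = algebraMap ℂ C(Z, ℂ) lam := by
      ext t; simp [Algebra.algebraMap_eq_smul_one]
    rw [h]
    exact Subalgebra.algebraMap_mem A lam
  · rw [norm_const_eq', hl]

end UAhelp


open UAhelp in
/-- With `φ`, `τ` as in the correspondence `T(F_{x,λ}) = F_{φ(x),τ(x,λ)}`, for every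
`f ∈ S(A)` one has `T(f)(φ(x)) = τ(x,1)·f(x)` on `Ch(A)₊` and
`T(f)(φ(x)) = τ(x,1)·conj(f(x))` on `Ch(A)₋`. -/
theorem form_of_T_on_choquet_boundary
    {X Y : Type*} [TopologicalSpace X] [CompactSpace X] [T2Space X] [Nonempty X]
    [TopologicalSpace Y] [CompactSpace Y] [T2Space Y] [Nonempty Y]
    (A : Subalgebra ℂ C(X, ℂ)) (hA : IsClosed (A : Set C(X, ℂ)))
    (hAsep : ∀ x₁ x₂ : X, x₁ ≠ x₂ → ∃ f ∈ A, f x₁ ≠ f x₂)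
    (B : Subalgebra ℂ C(Y, ℂ)) (hB : IsClosed (B : Set C(Y, ℂ)))
    (hBsep : ∀ y₁ y₂ : Y, y₁ ≠ y₂ → ∃ g ∈ B, g y₁ ≠ g y₂)
    (T : ↥(uaSphere A) → ↥(uaSphere B))
    (hTsur : Function.Surjective T)
    (hTiso : ∀ f g : ↥(uaSphere A),
      ‖(T f : C(Y, ℂ)) - (T g : C(Y, ℂ))‖ = ‖(f : C(X, ℂ)) - (g : C(X, ℂ))‖)
    (φ : X → Y) (hφ : Set.BijOn φ (choquetBdry A) (choquetBdry B))
    (τ : X → ℂ → ℂ)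
    (hτ : ∀ x ∈ choquetBdry A, ∀ lam : ℂ, ‖lam‖ = 1 →
      ‖τ x lam‖ = 1 ∧
      (fun f : ↥(uaSphere A) => (T f : C(Y, ℂ))) ''
          {f : ↥(uaSphere A) | (f : C(X, ℂ)) ∈ uaSlice A x lam} =
        uaSlice B (φ x) (τ x lam)) :
    ∀ (f : ↥(uaSphere A)), ∀ x ∈ choquetBdry A,
      (τ x Complex.I / τ x 1 = Complex.I →
        (T f : C(Y, ℂ)) (φ x) = τ x 1 * (f : C(X, ℂ)) x) ∧
      (τ x Complex.I / τ x 1 = -Complex.I →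
        (T f : C(Y, ℂ)) (φ x) = τ x 1 * conj ((f : C(X, ℂ)) x)) := by
  classical
  intro f x hx
  have hxB : φ x ∈ choquetBdry B := hφ.mapsTo hx
  obtain ⟨hfA, hfn⟩ := f.2
  set μ : ℂ := (f : C(X, ℂ)) x with hμ
  set ν : ℂ := (T f : C(Y, ℂ)) (φ x) with hν
  have hμ1 : Complex.abs μ ≤ 1 := by
    have := ContinuousMap.norm_coe_le_norm (f : C(X, ℂ)) x
    rwa [hfn, Complex.norm_eq_abs] at this
  have hν1 : Complex.abs ν ≤ 1 := by
    have := ContinuousMap.norm_coe_le_norm (T f : C(Y, ℂ)) (φ x)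
    rwa [(T f).2.2, Complex.norm_eq_abs] at this
  have habs1 : Complex.abs (1 : ℂ) = 1 := map_one Complex.abs
  have habsI : Complex.abs Complex.I = 1 := Complex.abs_I
  have hτ1 : Complex.abs (τ x 1) = 1 := (hτ x hx 1 habs1).1
  have hτ1ne : τ x 1 ≠ 0 := by
    intro h; rw [h] at hτ1; simp at hτ1
  have hconj : (starRingEnd ℂ) (τ x 1) * (τ x 1) = 1 := by
    rw [mul_comm, Complex.mul_conj]
    norm_cast
    rw [Complex.normSq_eq_abs, hτ1]; norm_num
  -- forward and backward correspondences
  have himg : ∀ (lam : ℂ), Complex.abs lam = 1 → ∀ (g : ↥(uaSphere A)),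
      (g : C(X, ℂ)) ∈ uaSlice A x lam → (T g : C(Y, ℂ)) ∈ uaSlice B (φ x) (τ x lam) := by
    intro lam hl g hg
    have h2 := (hτ x hx lam hl).2
    rw [← h2]
    exact ⟨g, hg, rfl⟩
  have hpre : ∀ (lam : ℂ), Complex.abs lam = 1 → ∀ h' : C(Y, ℂ),
      h' ∈ uaSlice B (φ x) (τ x lam) → ∃ g : ↥(uaSphere A),
        (g : C(X, ℂ)) ∈ uaSlice A x lam ∧ (T g : C(Y, ℂ)) = h' := by
    intro lam hl h' hh'
    rw [← (hτ x hx lam hl).2] at hh'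
    obtain ⟨g, hg, hgeq⟩ := hh'
    exact ⟨g, hg, hgeq⟩
  -- rigidity of τ on the circle
  have hiso : ∀ lam lam' : ℂ, Complex.abs lam = 1 → Complex.abs lam' = 1 →
      Complex.abs (τ x lam - τ x lam') = Complex.abs (lam - lam') := by
    intro lam lam' hl hl'
    apply le_antisymm
    · set g1 : ↥(uaSphere A) := ⟨ContinuousMap.const X lam, const_mem_sphere A hl⟩ with hg1
      set g2 : ↥(uaSphere A) := ⟨ContinuousMap.const X lam', const_mem_sphere A hl'⟩ with hg2
      have h1 : (T g1 : C(Y, ℂ)) ∈ uaSlice B (φ x) (τ x lam) :=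
        himg lam hl g1 ⟨g1.2, rfl⟩
      have h2 : (T g2 : C(Y, ℂ)) ∈ uaSlice B (φ x) (τ x lam') :=
        himg lam' hl' g2 ⟨g2.2, rfl⟩
      calc Complex.abs (τ x lam - τ x lam')
          = Complex.abs ((T g1 : C(Y, ℂ)) (φ x) - (T g2 : C(Y, ℂ)) (φ x)) := by
            rw [h1.2, h2.2]
        _ ≤ ‖(T g1 : C(Y, ℂ)) - (T g2 : C(Y, ℂ))‖ := abs_apply_sub_le _ _ _
        _ = ‖(g1 : C(X, ℂ)) - (g2 : C(X, ℂ))‖ := hTiso g1 g2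
        _ = Complex.abs (lam - lam') := norm_const_sub _ _
    · obtain ⟨g1, hg1, hTg1⟩ := hpre lam hl (ContinuousMap.const Y (τ x lam))
        ⟨const_mem_sphere B (hτ x hx lam hl).1, rfl⟩
      obtain ⟨g2, hg2, hTg2⟩ := hpre lam' hl' (ContinuousMap.const Y (τ x lam'))
        ⟨const_mem_sphere B (hτ x hx lam' hl').1, rfl⟩
      calc Complex.abs (lam - lam')
          = Complex.abs ((g1 : C(X, ℂ)) x - (g2 : C(X, ℂ)) x) := by rw [hg1.2, hg2.2]
        _ ≤ ‖(g1 : C(X, ℂ)) - (g2 : C(X, ℂ))‖ := abs_apply_sub_le _ _ _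
        _ = ‖(T g1 : C(Y, ℂ)) - (T g2 : C(Y, ℂ))‖ := (hTiso g1 g2).symm
        _ = Complex.abs (τ x lam - τ x lam') := by rw [hTg1, hTg2, norm_const_sub]
  -- distance claims
  have claim1 : ∀ lam : ℂ, Complex.abs lam = 1 →
      Complex.abs (ν - τ x lam) ≤ max 1 (Complex.abs (μ - lam)) := by
    intro lam hl
    apply le_of_forall_pos_le_add
    intro ε hε
    obtain ⟨g, hgslice, hgnorm⟩ := exists_slice_approx hA hx hfA hfn hl hε
    have hTG : (T ⟨g, hgslice.1⟩ : C(Y, ℂ)) ∈ uaSlice B (φ x) (τ x lam) :=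
      himg lam hl ⟨g, hgslice.1⟩ hgslice
    calc Complex.abs (ν - τ x lam)
        = Complex.abs ((T f : C(Y, ℂ)) (φ x) - (T ⟨g, hgslice.1⟩ : C(Y, ℂ)) (φ x)) := by
          rw [← hν, hTG.2]
      _ ≤ ‖(T f : C(Y, ℂ)) - (T ⟨g, hgslice.1⟩ : C(Y, ℂ))‖ := abs_apply_sub_le _ _ _
      _ = ‖(f : C(X, ℂ)) - g‖ := hTiso f ⟨g, hgslice.1⟩
      _ ≤ max 1 (Complex.abs (μ - lam)) + ε := by rw [hμ]; exact hgnorm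
  have claim2 : ∀ lam : ℂ, Complex.abs lam = 1 →
      Complex.abs (μ - lam) ≤ max 1 (Complex.abs (ν - τ x lam)) := by
    intro lam hl
    apply le_of_forall_pos_le_add
    intro ε hε
    obtain ⟨g', hg'slice, hg'norm⟩ :=
      exists_slice_approx hB hxB (T f).2.1 (T f).2.2 (hτ x hx lam hl).1 hε
    obtain ⟨G, hGslice, hTG⟩ := hpre lam hl g' hg'slice
    calc Complex.abs (μ - lam)
        = Complex.abs ((f : C(X, ℂ)) x - (G : C(X, ℂ)) x) := by rw [← hμ, hGslice.2]
      _ ≤ ‖(f : C(X, ℂ)) - (G : C(X, ℂ))‖ := abs_apply_sub_le _ _ _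
      _ = ‖(T f : C(Y, ℂ)) - (T G : C(Y, ℂ))‖ := (hTiso f G).symm
      _ = ‖(T f : C(Y, ℂ)) - g'‖ := by rw [hTG]
      _ ≤ max 1 (Complex.abs (ν - τ x lam)) + ε := by rw [hν]; exact hg'norm
  -- common set-up for the two cases
  set zz : ℂ := (starRingEnd ℂ) (τ x 1) * ν with hzz
  have habszz : Complex.abs zz ≤ 1 := by
    rw [hzz, map_mul, Complex.abs_conj, hτ1, one_mul]; exact hν1
  have hzzν : τ x 1 * zz = ν := by
    rw [hzz, ← mul_assoc, mul_comm (τ x 1), hconj, one_mul]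
  have habs_convert : ∀ lam : ℂ, Complex.abs (zz - lam) = Complex.abs (ν - τ x 1 * lam) := by
    intro lam
    have hsub : zz - lam = (starRingEnd ℂ) (τ x 1) * (ν - τ x 1 * lam) := by
      rw [mul_sub, hzz, ← mul_assoc, hconj, one_mul]
    rw [hsub, map_mul, Complex.abs_conj, hτ1, one_mul]
  constructor
  · -- plus case
    intro hplus
    rw [div_eq_iff hτ1ne] at hplus
    have hrot : ∀ lam : ℂ, Complex.abs lam = 1 → τ x lam = τ x 1 * lam := by
      intro lam hl
      apply circle_rot_plus hτ1 (hτ x hx lam hl).1 hl (hiso lam 1 hl habs1)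
      rw [← hplus]
      exact hiso lam Complex.I hl habsI
    have H1 : ∀ lam : ℂ, Complex.abs lam = 1 →
        Complex.abs (zz - lam) ≤ max 1 (Complex.abs (μ - lam)) := by
      intro lam hl
      have h := claim1 lam hl
      rw [hrot lam hl] at h
      rw [habs_convert lam]
      exact h
    have H2 : ∀ lam : ℂ, Complex.abs lam = 1 →
        Complex.abs (μ - lam) ≤ max 1 (Complex.abs (zz - lam)) := by
      intro lam hl
      have h := claim2 lam hl
      rw [hrot lam hl] at h
      rw [habs_convert lam]
      exact h
    have hfinal := circle_pinch habszz hμ1 H1 H2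
    rw [← hzzν, hfinal]
  · -- minus case
    intro hminus
    rw [div_eq_iff hτ1ne] at hminus
    have hrot : ∀ lam : ℂ, Complex.abs lam = 1 →
        τ x lam = τ x 1 * (starRingEnd ℂ) lam := by
      intro lam hl
      apply circle_rot_minus hτ1 (hτ x hx lam hl).1 hl (hiso lam 1 hl habs1)
      rw [← hminus]
      exact hiso lam Complex.I hl habsI
    have H1 : ∀ κ : ℂ, Complex.abs κ = 1 →
        Complex.abs (zz - κ) ≤ max 1 (Complex.abs ((starRingEnd ℂ) μ - κ)) := by
      intro κ hκ
      have hκ' : Complex.abs ((starRingEnd ℂ) κ) = 1 := by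
        rw [Complex.abs_conj]; exact hκ
      have h := claim1 _ hκ'
      rw [hrot _ hκ', Complex.conj_conj] at h
      have heq2 : Complex.abs (μ - (starRingEnd ℂ) κ)
          = Complex.abs ((starRingEnd ℂ) μ - κ) := by
        rw [← Complex.abs_conj, map_sub, Complex.conj_conj]
      rw [heq2] at h
      rw [habs_convert κ]
      exact h
    have H2 : ∀ κ : ℂ, Complex.abs κ = 1 →
        Complex.abs ((starRingEnd ℂ) μ - κ) ≤ max 1 (Complex.abs (zz - κ)) := by
      intro κ hκ
      have hκ' : Complex.abs ((starRingEnd ℂ) κ) = 1 := by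
        rw [Complex.abs_conj]; exact hκ
      have h := claim2 _ hκ'
      rw [hrot _ hκ', Complex.conj_conj] at h
      have heq2 : Complex.abs (μ - (starRingEnd ℂ) κ)
          = Complex.abs ((starRingEnd ℂ) μ - κ) := by
        rw [← Complex.abs_conj, map_sub, Complex.conj_conj]
      rw [heq2] at h
      rw [habs_convert κ]
      exact h
    have hμc : Complex.abs ((starRingEnd ℂ) μ) ≤ 1 := by
      rw [Complex.abs_conj]; exact hμ1
    have hfinal := circle_pinch habszz hμc H1 H2
    rw [← hzzν, hfinal]
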